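/- arXiv:2505.06712 — 5 statements merged into one kernel-verified Lean document; each statement's English description precedes it below -/
import Mathlib

section
/- For a linear map L : ℝ^m → ℝ^k whose p-th singular value σ_p(L) is positive for some p ∈ {1,…,k}, for every z ∈ ℝ^k and all r, ε > 0, the Lebesgue measure of the set {α ∈ B_m(0,r) : ‖Lα + z‖ ≤ ε} divided by the Lebesgue measure of B_m(0,r) is at most C_{m,k} (ε/(σ_p(L) r))^p, where C_{m,k} > 0 depends only on m and k. -/
open MeasureTheory
open scoped ENNReal

/-- The `p`-th singular value of a linear map `L : ℝ^m → ℝ^k`, via the Courant–Fischer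
max–min characterization: the supremum of `t ≥ 0` such that `t‖v‖ ≤ ‖Lv‖` on some
`p`-dimensional subspace. -/
noncomputable def singularValue {m k : ℕ}
    (L : EuclideanSpace ℝ (Fin m) →ₗ[ℝ] EuclideanSpace ℝ (Fin k)) (p : ℕ) : ℝ :=
  sSup {t : ℝ | 0 ≤ t ∧ ∃ E : Submodule ℝ (EuclideanSpace ℝ (Fin m)),
    Module.finrank ℝ E = p ∧ ∀ v ∈ E, t * ‖v‖ ≤ ‖L v‖}

set_option maxHeartbeats 1000000 in
/-- For every `m, k` there is a constant `C = C_{m,k} > 0` such that for every linear map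
`L : ℝ^m → ℝ^k` whose `p`-th singular value is positive (`1 ≤ p ≤ k`), every `z ∈ ℝ^k` and
all `r, ε > 0`, the proportion of `α` in the ball `B_m(0,r)` with `‖Lα + z‖ ≤ ε` is at most
`C (ε / (σ_p(L) r))^p`. -/
theorem stmt1 (m k : ℕ) :
    ∃ C : ℝ, 0 < C ∧
      ∀ (L : EuclideanSpace ℝ (Fin m) →ₗ[ℝ] EuclideanSpace ℝ (Fin k)) (p : ℕ),
        1 ≤ p → p ≤ k → 0 < singularValue L p →
        ∀ (z : EuclideanSpace ℝ (Fin k)) (r ε : ℝ), 0 < r → 0 < ε →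
          volume {α ∈ Metric.ball (0 : EuclideanSpace ℝ (Fin m)) r | ‖L α + z‖ ≤ ε}
            ≤ ENNReal.ofReal (C * (ε / (singularValue L p * r)) ^ p) *
              volume (Metric.ball (0 : EuclideanSpace ℝ (Fin m)) r) := by
  refine ⟨2 ^ m * (12 * (Real.sqrt k + 1)) ^ k, by positivity, ?_⟩
  intro L p hp1 hpk hσ z r ε hr hε
  set σ := singularValue L p with hσdef
  set Creal : ℝ := 2 ^ m * (12 * (Real.sqrt k + 1)) ^ k with hCdef
  -- extract a subspace
  have hne : {t : ℝ | 0 ≤ t ∧ ∃ E : Submodule ℝ (EuclideanSpace ℝ (Fin m)),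
      Module.finrank ℝ E = p ∧ ∀ v ∈ E, t * ‖v‖ ≤ ‖L v‖}.Nonempty := by
    by_contra h
    rw [Set.not_nonempty_iff_eq_empty] at h
    have h0 : σ = 0 := by rw [hσdef, singularValue, h, Real.sSup_empty]
    linarith
  have hσS : σ / 2 < sSup {t : ℝ | 0 ≤ t ∧ ∃ E : Submodule ℝ (EuclideanSpace ℝ (Fin m)),
      Module.finrank ℝ E = p ∧ ∀ v ∈ E, t * ‖v‖ ≤ ‖L v‖} := by
    rw [← singularValue, ← hσdef]; exact half_lt_self hσ
  obtain ⟨t, ⟨ht0, E, hEp, hLE⟩, htσ⟩ := exists_lt_of_lt_csSup hne hσS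
  have htpos : 0 < t := lt_of_lt_of_le (half_pos hσ) htσ.le
  -- orthonormal basis of E
  let b : OrthonormalBasis (Fin p) ℝ E :=
    (stdOrthonormalBasis ℝ E).reindex (finCongr hEp)
  -- grid parameters
  set s : ℝ := 3 * ε / t with hsdef
  have hs : 0 < s := by positivity
  have hsqrtp : 1 ≤ Real.sqrt p := by
    rw [show (1:ℝ) = Real.sqrt 1 by simp]
    exact Real.sqrt_le_sqrt (by exact_mod_cast hp1)
  have hsqrtp0 : 0 < Real.sqrt p := by linarith
  set q : ℝ := r / (s * Real.sqrt p) with hqdef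
  have hq : 0 < q := by positivity
  set M : ℕ := max 1 ⌊q⌋₊ with hMdef
  have hM1 : 1 ≤ M := le_max_left _ _
  have hMq : q / 2 ≤ (M : ℝ) := by
    rcases le_or_gt 1 q with h | h
    · have h2 : (1:ℝ) ≤ (⌊q⌋₊ : ℝ) := by exact_mod_cast Nat.one_le_floor_iff _ |>.mpr h
      have h3 : q < (⌊q⌋₊ : ℝ) + 1 := Nat.lt_floor_add_one q
      have h4 : (⌊q⌋₊ : ℝ) ≤ (M : ℝ) := by exact_mod_cast le_max_right 1 ⌊q⌋₊
      linarith
    · have h4 : (1:ℝ) ≤ (M : ℝ) := by exact_mod_cast hM1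
      linarith
  have hMub : (M : ℝ) - 1 ≤ q := by
    rcases Nat.eq_zero_or_pos ⌊q⌋₊ with h | h
    · have hM1' : M = 1 := by omega
      rw [hM1']; simpa using hq.le
    · have hM : M = ⌊q⌋₊ := max_eq_right h
      have h5 : (⌊q⌋₊ : ℝ) ≤ q := Nat.floor_le hq.le
      rw [hM]; linarith
  -- grid points
  set X : (Fin p → Fin M) → EuclideanSpace ℝ (Fin p) :=
    fun n => WithLp.toLp 2 (fun i => s * (n i : ℝ)) with hXdef
  set v : (Fin p → Fin M) → EuclideanSpace ℝ (Fin m) :=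
    fun n => ((b.repr.symm (X n) : E) : EuclideanSpace ℝ (Fin m)) with hvdef
  have hvnorm : ∀ n, ‖v n‖ = ‖X n‖ := by
    intro n
    rw [hvdef]
    rw [show ‖((b.repr.symm (X n) : E) : EuclideanSpace ℝ (Fin m))‖ = ‖b.repr.symm (X n)‖ from rfl]
    exact b.repr.symm.norm_map (X n)
  have hvsub : ∀ n n', v n - v n' = ((b.repr.symm (X n - X n') : E) : EuclideanSpace ℝ (Fin m)) := by
    intro n n'
    rw [map_sub]; rfl
  have hvmem : ∀ n n', v n - v n' ∈ E := by
    intro n n'; rw [hvsub]; exact Submodule.coe_mem _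
  have hvdist : ∀ n n', ‖v n - v n'‖ = ‖X n - X n'‖ := by
    intro n n'
    rw [hvsub]
    rw [show ‖((b.repr.symm (X n - X n') : E) : EuclideanSpace ℝ (Fin m))‖
        = ‖b.repr.symm (X n - X n')‖ from rfl]
    exact b.repr.symm.norm_map _
  -- norm bounds on grid points
  have hXnorm_le : ∀ n, ‖X n‖ ≤ Real.sqrt p * (s * ((M : ℝ) - 1)) := by
    intro n
    rw [EuclideanSpace.norm_eq]
    have hb : ∀ i : Fin p, ‖X n i‖ ^ 2 ≤ (s * ((M:ℝ) - 1)) ^ 2 := by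
      intro i
      have h1 : (n i : ℝ) ≤ (M : ℝ) - 1 := by
        have := (n i).isLt
        have : ((n i : ℕ) : ℝ) ≤ (M : ℝ) - 1 := by
          have h2 : (n i : ℕ) + 1 ≤ M := (n i).isLt
          have : ((n i : ℕ) : ℝ) + 1 ≤ (M : ℝ) := by exact_mod_cast h2
          linarith
        exact this
      have h0 : (0:ℝ) ≤ (n i : ℝ) := Nat.cast_nonneg _
      have hXi : ‖X n i‖ = s * (n i : ℝ) := by
        rw [hXdef]
        simp only [Real.norm_eq_abs, PiLp.toLp_apply]
        rw [abs_of_nonneg (by positivity)]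
      rw [hXi]
      have hM1' : (0:ℝ) ≤ (M:ℝ) - 1 := by
        have : (1:ℝ) ≤ (M:ℝ) := by exact_mod_cast hM1
        linarith
      have hterm : 0 ≤ s * (n i : ℝ) := by positivity
      nlinarith [hs.le, mul_le_mul_of_nonneg_left h1 hs.le]
    calc Real.sqrt (∑ i, ‖X n i‖ ^ 2)
        ≤ Real.sqrt (p * (s * ((M:ℝ) - 1)) ^ 2) := by
          apply Real.sqrt_le_sqrt
          calc ∑ i, ‖X n i‖ ^ 2 ≤ ∑ _i : Fin p, (s * ((M:ℝ) - 1)) ^ 2 :=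
                Finset.sum_le_sum (fun i _ => hb i)
            _ = p * (s * ((M:ℝ) - 1)) ^ 2 := by
                rw [Finset.sum_const, Finset.card_univ, Fintype.card_fin, nsmul_eq_mul]
      _ = Real.sqrt p * (s * ((M:ℝ) - 1)) := by
          have hM1' : (1:ℝ) ≤ (M:ℝ) := by exact_mod_cast hM1
          rw [Real.sqrt_mul (Nat.cast_nonneg p), Real.sqrt_sq (by nlinarith [hs.le])]
  have hvr : ∀ n, ‖v n‖ ≤ r := by
    intro n
    have h1 := hXnorm_le n
    have h2 : Real.sqrt p * (s * ((M:ℝ) - 1)) ≤ Real.sqrt p * (s * q) := by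
      have hpos : 0 ≤ Real.sqrt p * s := by positivity
      nlinarith [hMub]
    have h3 : Real.sqrt p * (s * q) = r := by
      rw [hqdef]; field_simp
    rw [hvnorm n]; linarith
  -- separation of grid points
  have hXsep : ∀ n n', n ≠ n' → s ≤ ‖X n - X n'‖ := by
    intro n n' hnn'
    obtain ⟨i, hi⟩ := Function.ne_iff.mp hnn'
    have hcoord : (X n - X n') i = s * ((n i : ℝ) - (n' i : ℝ)) := by
      have : (X n - X n') i = X n i - X n' i := rfl
      rw [this, hXdef]; simp only [PiLp.toLp_apply]; ring
    have h1 : (1:ℝ) ≤ |(n i : ℝ) - (n' i : ℝ)| := by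
      have hne2 : (n i : ℕ) ≠ (n' i : ℕ) := fun h => hi (Fin.ext h)
      have hz : ((n i : ℕ) : ℤ) ≠ ((n' i : ℕ) : ℤ) := by exact_mod_cast hne2
      have h2 : (1:ℤ) ≤ |((n i : ℕ) : ℤ) - ((n' i : ℕ) : ℤ)| :=
        Int.one_le_abs (sub_ne_zero.mpr hz)
      exact_mod_cast h2
    have h2 : s ≤ |(X n - X n') i| := by
      rw [hcoord, abs_mul, abs_of_pos hs]
      nlinarith
    have h3 : |(X n - X n') i| ≤ ‖X n - X n'‖ := by
      rw [EuclideanSpace.norm_eq, show |(X n - X n') i| = Real.sqrt (‖(X n - X n') i‖ ^ 2) by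
        rw [Real.norm_eq_abs, Real.sqrt_sq_eq_abs, abs_abs]]
      exact Real.sqrt_le_sqrt (Finset.single_le_sum
        (f := fun j => ‖(X n - X n') j‖ ^ 2) (fun j _ => sq_nonneg _) (Finset.mem_univ i))
    linarith
  -- the set and its translates
  set A := {α ∈ Metric.ball (0 : EuclideanSpace ℝ (Fin m)) r | ‖L α + z‖ ≤ ε} with hAdef
  have hAm : MeasurableSet A := by
    have hc : Continuous fun α : EuclideanSpace ℝ (Fin m) => ‖L α + z‖ :=
      ((L.continuous_of_finiteDimensional).add continuous_const).norm
    exact measurableSet_ball.inter (measurableSet_le hc.measurable measurable_const)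
  set T : (Fin p → Fin M) → Set (EuclideanSpace ℝ (Fin m)) :=
    fun n => (fun a => a - v n) ⁻¹' A with hTdef
  have hTm : ∀ n, MeasurableSet (T n) :=
    fun n => hAm.preimage (measurable_id.sub measurable_const)
  have hTvol : ∀ n, volume (T n) = volume A := by
    intro n
    rw [hTdef]
    simp only [sub_eq_add_neg]
    exact measure_preimage_add_right volume (-v n) A
  have hTdisj : Pairwise (Function.onFun Disjoint T) := by
    intro n n' hnn'
    rw [Function.onFun, Set.disjoint_left]
    intro a han han'
    have h1 : a - v n ∈ A := han
    have h2 : a - v n' ∈ A := han'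
    have hL2 : ‖L (v n - v n')‖ ≤ 2 * ε := by
      have e1 : ‖L (a - v n) + z‖ ≤ ε := h1.2
      have e2 : ‖L (a - v n') + z‖ ≤ ε := h2.2
      have h3 : L (v n - v n') = (L (a - v n') + z) - (L (a - v n) + z) := by
        have h4 : v n - v n' = (a - v n') - (a - v n) := by abel
        rw [h4, map_sub]
        abel
      rw [h3]
      calc ‖(L (a - v n') + z) - (L (a - v n) + z)‖
          ≤ ‖L (a - v n') + z‖ + ‖L (a - v n) + z‖ := norm_sub_le _ _
        _ ≤ 2 * ε := by linarith
    have h4 := hLE _ (hvmem n n')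
    have h5 := hXsep n n' hnn'
    rw [← hvdist n n'] at h5
    have h6 : t * s = 3 * ε := by rw [hsdef]; field_simp
    nlinarith
  have hUnion : (⋃ n, T n) ⊆ Metric.ball (0 : EuclideanSpace ℝ (Fin m)) (2 * r) := by
    intro a ha
    rw [Set.mem_iUnion] at ha
    obtain ⟨n, hn⟩ := ha
    have h1 : a - v n ∈ Metric.ball (0 : EuclideanSpace ℝ (Fin m)) r := hn.1
    rw [mem_ball_zero_iff] at h1 ⊢
    calc ‖a‖ = ‖(a - v n) + v n‖ := by rw [sub_add_cancel]
      _ ≤ ‖a - v n‖ + ‖v n‖ := norm_add_le _ _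
      _ < r + r := add_lt_add_of_lt_of_le h1 (hvr n)
      _ = 2 * r := by ring
  -- volume counting
  have hsum : (M ^ p : ℝ≥0∞) * volume A
      ≤ volume (Metric.ball (0 : EuclideanSpace ℝ (Fin m)) (2 * r)) := by
    have h1 : volume (⋃ n, T n) = ∑' n, volume (T n) := measure_iUnion hTdisj hTm
    have h2 : ∑' n : Fin p → Fin M, volume (T n) = (M ^ p : ℝ≥0∞) * volume A := by
      rw [tsum_fintype]
      simp only [hTvol]
      rw [Finset.sum_const, Finset.card_univ]
      rw [show Fintype.card (Fin p → Fin M) = M ^ p by simp [Fintype.card_fun]]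
      rw [nsmul_eq_mul]
      push_cast
      ring
    calc (M ^ p : ℝ≥0∞) * volume A = volume (⋃ n, T n) := by rw [h1, h2]
      _ ≤ _ := measure_mono hUnion
  have hball : volume (Metric.ball (0 : EuclideanSpace ℝ (Fin m)) (2 * r))
      = ENNReal.ofReal (2 ^ m) * volume (Metric.ball (0 : EuclideanSpace ℝ (Fin m)) r) := by
    rw [Measure.addHaar_ball_mul_of_pos volume 0 (by norm_num : (0:ℝ) < 2) r,
      finrank_euclideanSpace_fin]
  -- the main real-number inequality
  set x : ℝ := ε / (σ * r) with hxdef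
  have hx : 0 < x := by
    rw [hxdef]; positivity
  have hqx : 1 / (6 * Real.sqrt p) < q * x := by
    have hqxval : q * x = t / (3 * Real.sqrt p * σ) := by
      rw [hqdef, hxdef, hsdef]
      field_simp
    rw [hqxval]
    rw [div_lt_div_iff₀ (by positivity) (by positivity)]
    nlinarith
  have hMx : 1 / (12 * Real.sqrt p) ≤ (M : ℝ) * x := by
    have h1 : q / 2 * x ≤ (M : ℝ) * x := mul_le_mul_of_nonneg_right hMq hx.le
    have h2 : 1 / (12 * Real.sqrt p) ≤ q / 2 * x := by
      rw [div_le_iff₀ (by positivity)]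
      have h3 := hqx
      rw [div_lt_iff₀ (by positivity)] at h3
      nlinarith
    linarith
  have hkey : (2:ℝ) ^ m ≤ (M:ℝ) ^ p * (Creal * x ^ p) := by
    have h2 : ((1:ℝ) / (12 * Real.sqrt p)) ^ p ≤ ((M:ℝ) * x) ^ p :=
      pow_le_pow_left₀ (by positivity) hMx p
    have h3 : (12 * Real.sqrt p) ^ p ≤ (12 * (Real.sqrt k + 1)) ^ k := by
      have hsk : Real.sqrt p ≤ Real.sqrt k + 1 := by
        have : Real.sqrt p ≤ Real.sqrt k := Real.sqrt_le_sqrt (by exact_mod_cast hpk)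
        linarith
      calc (12 * Real.sqrt p) ^ p ≤ (12 * (Real.sqrt k + 1)) ^ p :=
            pow_le_pow_left₀ (by positivity) (by nlinarith) p
        _ ≤ (12 * (Real.sqrt k + 1)) ^ k := by
            apply pow_le_pow_right₀ _ hpk
            nlinarith [Real.sqrt_nonneg k]
    have h4 : (1:ℝ) ≤ (12 * (Real.sqrt k + 1)) ^ k * ((M:ℝ) * x) ^ p := by
      calc (1:ℝ) = (12 * Real.sqrt p) ^ p * ((1:ℝ) / (12 * Real.sqrt p)) ^ p := by
            rw [← mul_pow, mul_one_div, div_self (by positivity), one_pow]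
        _ ≤ (12 * (Real.sqrt k + 1)) ^ k * ((M:ℝ) * x) ^ p :=
            mul_le_mul h3 h2 (by positivity) (by positivity)
    have h6 : (M:ℝ) ^ p * (Creal * x ^ p)
        = 2 ^ m * ((12 * (Real.sqrt k + 1)) ^ k * ((M:ℝ) * x) ^ p) := by
      rw [hCdef, mul_pow]; ring
    rw [h6]
    nlinarith [pow_pos (by norm_num : (0:ℝ) < 2) m]
  -- conclude in ℝ≥0∞
  have hMp0 : (M ^ p : ℝ≥0∞) ≠ 0 := by
    have : (M:ℝ≥0∞) ≠ 0 := by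
      simp only [ne_eq, Nat.cast_eq_zero]
      omega
    exact pow_ne_zero p this
  have hMptop : (M ^ p : ℝ≥0∞) ≠ ⊤ := by
    exact ENNReal.pow_ne_top (ENNReal.natCast_ne_top M)
  have hofReal : ENNReal.ofReal ((2:ℝ) ^ m) ≤ (M ^ p : ℝ≥0∞) * ENNReal.ofReal (Creal * x ^ p) := by
    have h1 : (M ^ p : ℝ≥0∞) = ENNReal.ofReal ((M:ℝ) ^ p) := by
      rw [ENNReal.ofReal_pow (Nat.cast_nonneg M), ENNReal.ofReal_natCast]
    rw [h1, ← ENNReal.ofReal_mul (by positivity)]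
    exact ENNReal.ofReal_le_ofReal hkey
  have hfinal : (M ^ p : ℝ≥0∞) * volume A
      ≤ (M ^ p : ℝ≥0∞) * (ENNReal.ofReal (Creal * x ^ p)
        * volume (Metric.ball (0 : EuclideanSpace ℝ (Fin m)) r)) := by
    calc (M ^ p : ℝ≥0∞) * volume A
        ≤ volume (Metric.ball (0 : EuclideanSpace ℝ (Fin m)) (2 * r)) := hsum
      _ = ENNReal.ofReal (2 ^ m) * volume (Metric.ball (0 : EuclideanSpace ℝ (Fin m)) r) := hball
      _ ≤ ((M ^ p : ℝ≥0∞) * ENNReal.ofReal (Creal * x ^ p))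
          * volume (Metric.ball (0 : EuclideanSpace ℝ (Fin m)) r) := mul_le_mul_left hofReal _
      _ = _ := by rw [mul_assoc]
  exact (ENNReal.mul_le_mul_iff_right hMp0 hMptop).mp hfinal
end

section
/- For every collection z₁, …, z_k of k distinct points in ℝ^N and every collection of vectors u₁, …, u_k ∈ ℝ^N, there exists an N-variate polynomial p of degree at most 2k−1 such that ∇p(z_i) = u_i for every i ∈ {1, …, k}. -/
open Matrix

noncomputable section Stmt7Aux

variable {N : ℕ}

/-- sum-of-squares function centered at `c` -/
def stmt7Gf (c : Fin N → ℝ) : (Fin N → ℝ) → ℝ := fun x => ∑ n, (x n - c n) ^ 2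

/-- linear function -/
def stmt7Lf (u c : Fin N → ℝ) : (Fin N → ℝ) → ℝ := fun x => ∑ n, u n * (x n - c n)

/-- dot-product continuous linear map -/
def stmt7D (u : Fin N → ℝ) : (Fin N → ℝ) →L[ℝ] ℝ :=
  ∑ n, u n • (ContinuousLinearMap.proj n : (Fin N → ℝ) →L[ℝ] ℝ)

lemma stmt7D_apply (u v : Fin N → ℝ) : stmt7D u v = u ⬝ᵥ v := by
  simp [stmt7D, dotProduct, ContinuousLinearMap.sum_apply]

lemma stmt7_hasFDerivAt_Gf (c a : Fin N → ℝ) :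
    HasFDerivAt (stmt7Gf c) (stmt7D (fun n => 2 * (a n - c n))) a := by
  have h : ∀ n : Fin N, HasFDerivAt (fun x : Fin N → ℝ => (x n - c n) ^ 2)
      ((2 * (a n - c n)) • (ContinuousLinearMap.proj n : (Fin N → ℝ) →L[ℝ] ℝ)) a := by
    intro n
    have h1 : HasFDerivAt (fun x : Fin N → ℝ => x n - c n)
        (ContinuousLinearMap.proj n : (Fin N → ℝ) →L[ℝ] ℝ) a :=
      (hasFDerivAt_apply n a).sub_const (c n)
    have h2 := h1.fun_mul h1
    have : HasFDerivAt (fun x : Fin N → ℝ => (x n - c n) ^ 2)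
        (((a n - c n) • (ContinuousLinearMap.proj n : (Fin N → ℝ) →L[ℝ] ℝ)) +
          ((a n - c n) • (ContinuousLinearMap.proj n : (Fin N → ℝ) →L[ℝ] ℝ))) a := by
      simpa only [← pow_two] using h2
    convert this using 1
    rw [← add_smul]
    congr 1
    ring
  have := HasFDerivAt.fun_sum (fun n (_ : n ∈ Finset.univ) => h n)
  exact this

lemma stmt7_hasFDerivAt_Gf_zero (c : Fin N → ℝ) :
    HasFDerivAt (stmt7Gf c) (0 : (Fin N → ℝ) →L[ℝ] ℝ) c := by
  have := stmt7_hasFDerivAt_Gf c c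
  simpa [stmt7D] using this

lemma stmt7_hasFDerivAt_Lf (u c a : Fin N → ℝ) :
    HasFDerivAt (stmt7Lf u c) (stmt7D u) a := by
  have h : ∀ n : Fin N, HasFDerivAt (fun x : Fin N → ℝ => u n * (x n - c n))
      (u n • (ContinuousLinearMap.proj n : (Fin N → ℝ) →L[ℝ] ℝ)) a :=
    fun n => ((hasFDerivAt_apply n a).sub_const (c n)).const_mul (u n)
  have := HasFDerivAt.fun_sum (fun n (_ : n ∈ Finset.univ) => h n)
  exact this

lemma stmt7_diff_Gf (c : Fin N → ℝ) : Differentiable ℝ (stmt7Gf c) :=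
  fun a => (stmt7_hasFDerivAt_Gf c a).differentiableAt

end Stmt7Aux

/-- Gradient interpolation (Sauer–Yorke–Casdagli): for `k` distinct points `z₁, …, z_k` in
`ℝ^N` and arbitrary vectors `u₁, …, u_k ∈ ℝ^N` there is an `N`-variate polynomial `p` of
total degree at most `2k - 1` with `∇p(zᵢ) = uᵢ` for all `i`, i.e. the differential of the
evaluation of `p` at `zᵢ` is the inner product with `uᵢ`. -/
theorem stmt7 {N k : ℕ} (z : Fin k → (Fin N → ℝ)) (hz : Function.Injective z)
    (u : Fin k → (Fin N → ℝ)) :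
    ∃ p : MvPolynomial (Fin N) ℝ, p.totalDegree ≤ 2 * k - 1 ∧
      ∀ i : Fin k, ∀ v : Fin N → ℝ,
        fderiv ℝ (fun x : Fin N → ℝ => MvPolynomial.eval x p) (z i) v = u i ⬝ᵥ v := by
  classical
  -- polynomial pieces
  set gP : Fin k → MvPolynomial (Fin N) ℝ :=
    fun j => ∑ n, (MvPolynomial.X n - MvPolynomial.C (z j n)) ^ 2 with hgP
  set lP : Fin k → MvPolynomial (Fin N) ℝ :=
    fun i => ∑ n, MvPolynomial.C (u i n) * (MvPolynomial.X n - MvPolynomial.C (z i n)) with hlP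
  -- value of the product at z i
  set c : Fin k → ℝ := fun i => (∏ j ∈ Finset.univ.erase i, stmt7Gf (z j) (z i))⁻¹ with hc
  -- positivity of the products
  have hGpos : ∀ i j : Fin k, i ≠ j → 0 < stmt7Gf (z j) (z i) := by
    intro i j hij
    obtain ⟨n, hn⟩ := Function.ne_iff.mp (fun h => hij (hz h))
    have hterm : 0 < (z i n - z j n) ^ 2 := pow_two_pos_of_ne_zero (sub_ne_zero.mpr hn)
    exact Finset.sum_pos' (fun m _ => sq_nonneg _) ⟨n, Finset.mem_univ n, hterm⟩
  have hPpos : ∀ i : Fin k, 0 < ∏ j ∈ Finset.univ.erase i, stmt7Gf (z j) (z i) := by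
    intro i
    exact Finset.prod_pos fun j hj => hGpos i j (Ne.symm (Finset.ne_of_mem_erase hj))
  have hcP : ∀ i : Fin k, c i * ∏ j ∈ Finset.univ.erase i, stmt7Gf (z j) (z i) = 1 := by
    intro i
    exact inv_mul_cancel₀ (hPpos i).ne'
  refine ⟨∑ i, MvPolynomial.C (c i) * (lP i * ∏ j ∈ Finset.univ.erase i, gP j), ?_, ?_⟩
  · -- degree bound
    refine (MvPolynomial.totalDegree_finset_sum _ _).trans (Finset.sup_le fun i _ => ?_)
    have hk : 0 < k := i.pos
    have hgdeg : ∀ j, (gP j).totalDegree ≤ 2 := by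
      intro j
      refine (MvPolynomial.totalDegree_finset_sum _ _).trans (Finset.sup_le fun n _ => ?_)
      calc ((MvPolynomial.X n - MvPolynomial.C (z j n)) ^ 2).totalDegree
          ≤ 2 * (MvPolynomial.X n - MvPolynomial.C (z j n)).totalDegree :=
            MvPolynomial.totalDegree_pow _ _
        _ ≤ 2 * 1 := by
            have := (MvPolynomial.totalDegree_sub_C_le (MvPolynomial.X n) (z j n)).trans
              (le_of_eq (MvPolynomial.totalDegree_X n))
            omega
        _ = 2 := rfl
    have hldeg : (lP i).totalDegree ≤ 1 := by
      refine (MvPolynomial.totalDegree_finset_sum _ _).trans (Finset.sup_le fun n _ => ?_)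
      calc (MvPolynomial.C (u i n) * (MvPolynomial.X n - MvPolynomial.C (z i n))).totalDegree
          ≤ (MvPolynomial.C (u i n)).totalDegree
            + (MvPolynomial.X n - MvPolynomial.C (z i n)).totalDegree :=
            MvPolynomial.totalDegree_mul _ _
        _ ≤ 0 + 1 := by
            have h1 := (MvPolynomial.totalDegree_sub_C_le (MvPolynomial.X n) (z i n)).trans
              (le_of_eq (MvPolynomial.totalDegree_X n))
            have h2 : (MvPolynomial.C (u i n) : MvPolynomial (Fin N) ℝ).totalDegree = 0 :=
              MvPolynomial.totalDegree_C _
            omega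
        _ = 1 := rfl
    have hprod : (∏ j ∈ Finset.univ.erase i, gP j).totalDegree ≤ 2 * (k - 1) := by
      refine (MvPolynomial.totalDegree_finset_prod _ _).trans ?_
      calc ∑ j ∈ Finset.univ.erase i, (gP j).totalDegree
          ≤ ∑ j ∈ Finset.univ.erase i, 2 := Finset.sum_le_sum fun j _ => hgdeg j
        _ = (Finset.univ.erase i).card * 2 := by rw [Finset.sum_const, smul_eq_mul]
        _ = 2 * (k - 1) := by
            rw [Finset.card_erase_of_mem (Finset.mem_univ i), Finset.card_univ, Fintype.card_fin]
            ring
    calc (MvPolynomial.C (c i) * (lP i * ∏ j ∈ Finset.univ.erase i, gP j)).totalDegree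
        ≤ (MvPolynomial.C (c i)).totalDegree
          + (lP i * ∏ j ∈ Finset.univ.erase i, gP j).totalDegree :=
          MvPolynomial.totalDegree_mul _ _
      _ ≤ 0 + ((lP i).totalDegree + (∏ j ∈ Finset.univ.erase i, gP j).totalDegree) := by
          have h2 : (MvPolynomial.C (c i) : MvPolynomial (Fin N) ℝ).totalDegree = 0 :=
            MvPolynomial.totalDegree_C _
          have := MvPolynomial.totalDegree_mul (lP i) (∏ j ∈ Finset.univ.erase i, gP j)
          omega
      _ ≤ 2 * k - 1 := by omega
  · -- derivative
    intro i v
    -- the evaluation of p agrees with the explicit function F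
    have heval : (fun x : Fin N → ℝ =>
        MvPolynomial.eval x (∑ i, MvPolynomial.C (c i) * (lP i * ∏ j ∈ Finset.univ.erase i, gP j)))
        = fun x => ∑ m, c m * (stmt7Lf (u m) (z m) x * ∏ j ∈ Finset.univ.erase m, stmt7Gf (z j) x) := by
      funext x
      simp [hgP, hlP, stmt7Gf, stmt7Lf, map_sum, map_prod]
    rw [heval]
    -- the derivative of the explicit function at z i is stmt7D (u i)
    have hF : HasFDerivAt
        (fun x => ∑ m, c m * (stmt7Lf (u m) (z m) x * ∏ j ∈ Finset.univ.erase m, stmt7Gf (z j) x))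
        (stmt7D (u i)) (z i) := by
      have hterm : ∀ m : Fin k, HasFDerivAt
          (fun x => c m * (stmt7Lf (u m) (z m) x * ∏ j ∈ Finset.univ.erase m, stmt7Gf (z j) x))
          (if m = i then stmt7D (u i) else 0) (z i) := by
        intro m
        by_cases hmi : m = i
        · subst hmi
          simp only [if_pos rfl]
          -- product part is differentiable
          have hP := HasFDerivAt.finset_prod
            (u := Finset.univ.erase m) (g := fun j => stmt7Gf (z j))
            (fun j _ => stmt7_hasFDerivAt_Gf (z j) (z m))
          have hL := stmt7_hasFDerivAt_Lf (u m) (z m) (z m)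
          have hmul := hL.fun_mul hP
          have hL0 : stmt7Lf (u m) (z m) (z m) = 0 := by simp [stmt7Lf]
          have h := hmul.const_mul (c m)
          refine h.congr_fderiv ?_
          simp only [hL0, zero_smul, zero_add, smul_smul, if_true]
          rw [hcP m, one_smul]
        · simp only [if_neg hmi]
          have hi_mem : i ∈ Finset.univ.erase m := Finset.mem_erase.mpr ⟨Ne.symm hmi, Finset.mem_univ i⟩
          have hfun : (fun x => ∏ j ∈ Finset.univ.erase m, stmt7Gf (z j) x)
              = fun x => stmt7Gf (z i) x *
                  ∏ j ∈ (Finset.univ.erase m).erase i, stmt7Gf (z j) x := by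
            funext x
            exact (Finset.mul_prod_erase _ _ hi_mem).symm
          have hR := HasFDerivAt.finset_prod
            (u := (Finset.univ.erase m).erase i) (g := fun j => stmt7Gf (z j))
            (fun j _ => stmt7_hasFDerivAt_Gf (z j) (z i))
          have hGi := stmt7_hasFDerivAt_Gf_zero (z i)
          have hPmul := hGi.fun_mul hR
          have hG0 : stmt7Gf (z i) (z i) = 0 := by simp [stmt7Gf]
          have hP : HasFDerivAt (fun x => ∏ j ∈ Finset.univ.erase m, stmt7Gf (z j) x)
              (0 : (Fin N → ℝ) →L[ℝ] ℝ) (z i) := by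
            rw [hfun]
            refine hPmul.congr_fderiv ?_
            simp [hG0]
          have hL := stmt7_hasFDerivAt_Lf (u m) (z m) (z i)
          have hmul := hL.fun_mul hP
          have hP0 : (∏ j ∈ Finset.univ.erase m, stmt7Gf (z j) (z i)) = 0 := by
            rw [← Finset.mul_prod_erase _ _ hi_mem, hG0, zero_mul]
          have h := hmul.const_mul (c m)
          refine h.congr_fderiv ?_
          simp [hP0]
      have hsum := HasFDerivAt.fun_sum (fun m (_ : m ∈ Finset.univ) => hterm m)
      refine hsum.congr_fderiv ?_
      rw [Finset.sum_ite_eq' Finset.univ i (fun _ => stmt7D (u i))]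
      simp
    rw [hF.fderiv]
    exact stmt7D_apply (u i) v
end

section
/- Let M ⊆ ℝ^N be an embedded C¹ submanifold. Fix k distinct points z₁, …, z_k ∈ M and linear functionals L_i : T_{z_i}M → ℝ for i = 1, …, k, where T_{z_i}M is identified with a linear subspace of ℝ^N. Then there exists an N-variate polynomial p of degree at most 2k−1 such that the differential of p restricted to M at z_i equals L_i for every i. -/
open MvPolynomial Finset

section aux

variable {N k : ℕ}

/-- The "squared distance" function to a point. -/
private def gfun (w : Fin N → ℝ) (x : Fin N → ℝ) : ℝ :=
  ∑ t, (x t - w t) * (x t - w t)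

private noncomputable def Gmap (w : Fin N → ℝ) (x : Fin N → ℝ) : (Fin N → ℝ) →L[ℝ] ℝ :=
  ∑ t, ((x t - w t) • ContinuousLinearMap.proj t + (x t - w t) • ContinuousLinearMap.proj t)

private lemma hasFDerivAt_gfun (w x : Fin N → ℝ) :
    HasFDerivAt (gfun w) (Gmap w x) x := by
  unfold gfun Gmap
  exact HasFDerivAt.fun_sum fun t _ =>
    (((ContinuousLinearMap.proj t :
        (Fin N → ℝ) →L[ℝ] ℝ).hasFDerivAt.sub_const (w t)).mul
      ((ContinuousLinearMap.proj t :
        (Fin N → ℝ) →L[ℝ] ℝ).hasFDerivAt.sub_const (w t)))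

private lemma Gmap_self (w : Fin N → ℝ) : Gmap w w = 0 := by
  unfold Gmap; simp

private lemma gfun_self (w : Fin N → ℝ) : gfun w w = 0 := by
  unfold gfun; simp

private lemma gfun_pos {w x : Fin N → ℝ} (h : w ≠ x) : 0 < gfun w x := by
  rcases Finset.sum_eq_zero_iff_of_nonneg
      (fun t _ => mul_self_nonneg (x t - w t)) with _
  by_contra hle
  push_neg at hle
  have h0 : gfun w x = 0 :=
    le_antisymm hle (Finset.sum_nonneg fun t _ => mul_self_nonneg (x t - w t))
  apply h
  funext t
  have := (Finset.sum_eq_zero_iff_of_nonneg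
      (fun t (_ : t ∈ Finset.univ) => mul_self_nonneg (x t - w t))).mp h0 t (by simp)
  have : x t - w t = 0 := by
    by_contra hne
    exact hne (by nlinarith [mul_self_nonneg (x t - w t)])
  linarith [this]

end aux

/-- Tangential gradient interpolation on a submanifold: let `M ⊆ ℝ^N` be (an embedded C¹
submanifold, whose tangent space at a point `zᵢ ∈ M` is the linear subspace `E i ⊆ ℝ^N`).
Given `k` distinct points `z₁,…,z_k ∈ M` and linear functionals `Lᵢ : E i → ℝ`, there is an
`N`-variate polynomial `p` of degree at most `2k−1` whose differential at `zᵢ`, restricted to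
the tangent space `E i` (i.e. the differential of `p|_M` at `zᵢ`), equals `Lᵢ` for each `i`. -/
theorem stmt8 {N k : ℕ} (M : Set (Fin N → ℝ))
    (z : Fin k → (Fin N → ℝ)) (hzM : ∀ i, z i ∈ M) (hz : Function.Injective z)
    (E : Fin k → Submodule ℝ (Fin N → ℝ))
    (L : ∀ i : Fin k, (E i) →ₗ[ℝ] ℝ) :
    ∃ p : MvPolynomial (Fin N) ℝ, p.totalDegree ≤ 2 * k - 1 ∧
      ∀ (i : Fin k) (v : E i),
        fderiv ℝ (fun x : Fin N → ℝ => MvPolynomial.eval x p) (z i) (v : Fin N → ℝ)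
          = L i v := by
  classical
  rcases Nat.eq_zero_or_pos k with hk | hk
  · subst hk
    exact ⟨0, by simp, fun i => i.elim0⟩
  -- extend each `L i` to a functional on all of `ℝ^N`
  choose ℓ hℓ using fun i => LinearMap.exists_extend (L i)
  -- coefficients of the extensions
  set a : Fin k → Fin N → ℝ := fun i t => ℓ i (fun s => if t = s then 1 else 0) with ha
  have key : ∀ i (x : Fin N → ℝ), ℓ i x = ∑ t, (x t) * a i t := by
    intro i x
    rw [LinearMap.pi_apply_eq_sum_univ (ℓ i) x]
    simp [ha, smul_eq_mul]
  -- the linear part functions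
  set ℓf : Fin k → (Fin N → ℝ) → ℝ := fun i x => ∑ t, (x t - z i t) * a i t with hℓf
  have hℓf_eq : ∀ i, ℓf i = fun x => ℓ i x - ℓ i (z i) := by
    intro i; funext x
    simp only [hℓf, sub_mul, Finset.sum_sub_distrib, key]
  -- the continuous linear maps
  set A : Fin k → ((Fin N → ℝ) →L[ℝ] ℝ) := fun i =>
    LinearMap.toContinuousLinearMap (ℓ i) with hA
  have hAapp : ∀ i v, A i v = ℓ i v := fun i v => rfl
  have hℓf_deriv : ∀ i x, HasFDerivAt (ℓf i) (A i) x := by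
    intro i x
    rw [hℓf_eq i]
    exact ((A i).hasFDerivAt).sub_const (ℓ i (z i))
  -- distances between the points
  have hcpos : ∀ i j, j ≠ i → 0 < gfun (z j) (z i) := by
    intro i j hij
    exact gfun_pos (fun h => hij (hz h))
  set b : Fin k → ℝ := fun i => ∏ j ∈ Finset.univ.erase i, (gfun (z j) (z i))⁻¹ with hb
  -- the products
  set B : Fin k → (Fin N → ℝ) → ℝ := fun i x => ∏ j ∈ Finset.univ.erase i, gfun (z j) x
    with hB
  set DB : Fin k → (Fin N → ℝ) → ((Fin N → ℝ) →L[ℝ] ℝ) := fun i x =>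
    ∑ j ∈ Finset.univ.erase i,
      (∏ j' ∈ (Finset.univ.erase i).erase j, gfun (z j') x) • Gmap (z j) x with hDB
  have hB_deriv : ∀ i x, HasFDerivAt (B i) (DB i x) x := by
    intro i x
    exact HasFDerivAt.finset_prod (fun j _ => hasFDerivAt_gfun (z j) x)
  -- the polynomial
  set p : MvPolynomial (Fin N) ℝ := ∑ i,
      MvPolynomial.C (b i) *
        ((∑ t, (MvPolynomial.X t - MvPolynomial.C (z i t)) * MvPolynomial.C (a i t)) *
          ∏ j ∈ Finset.univ.erase i,
            ∑ t, (MvPolynomial.X t - MvPolynomial.C (z j t)) *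
              (MvPolynomial.X t - MvPolynomial.C (z j t))) with hp
  have heval : (fun x : Fin N → ℝ => MvPolynomial.eval x p)
      = fun x => ∑ i, b i * (ℓf i x * B i x) := by
    funext x
    simp [hp, hℓf, hB, gfun]
  refine ⟨p, ?_, ?_⟩
  · -- degree bound
    rw [hp]
    refine (MvPolynomial.totalDegree_finset_sum _ _).trans (Finset.sup_le fun i _ => ?_)
    have h1 : (∑ t, (MvPolynomial.X t - MvPolynomial.C (z i t)) *
        (MvPolynomial.C (a i t)) : MvPolynomial (Fin N) ℝ).totalDegree ≤ 1 := by
      refine (MvPolynomial.totalDegree_finset_sum _ _).trans (Finset.sup_le fun t _ => ?_)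
      refine (MvPolynomial.totalDegree_mul _ _).trans ?_
      have hx : (MvPolynomial.X t - MvPolynomial.C (z i t) :
          MvPolynomial (Fin N) ℝ).totalDegree ≤ 1 := by
        rw [sub_eq_add_neg]
        refine (MvPolynomial.totalDegree_add _ _).trans ?_
        simp [MvPolynomial.totalDegree_X, MvPolynomial.totalDegree_neg]
      simpa [MvPolynomial.totalDegree_C] using hx
    have h2 : ∀ j : Fin k, (∑ t, (MvPolynomial.X t - MvPolynomial.C (z j t)) *
        (MvPolynomial.X t - MvPolynomial.C (z j t)) :
        MvPolynomial (Fin N) ℝ).totalDegree ≤ 2 := by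
      intro j
      refine (MvPolynomial.totalDegree_finset_sum _ _).trans (Finset.sup_le fun t _ => ?_)
      refine (MvPolynomial.totalDegree_mul _ _).trans ?_
      have hx : (MvPolynomial.X t - MvPolynomial.C (z j t) :
          MvPolynomial (Fin N) ℝ).totalDegree ≤ 1 := by
        rw [sub_eq_add_neg]
        refine (MvPolynomial.totalDegree_add _ _).trans ?_
        simp [MvPolynomial.totalDegree_X, MvPolynomial.totalDegree_neg]
      omega
    calc (MvPolynomial.C (b i) *
        ((∑ t, (MvPolynomial.X t - MvPolynomial.C (z i t)) * MvPolynomial.C (a i t)) *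
          ∏ j ∈ Finset.univ.erase i,
            ∑ t, (MvPolynomial.X t - MvPolynomial.C (z j t)) *
              (MvPolynomial.X t - MvPolynomial.C (z j t)))).totalDegree
        ≤ (MvPolynomial.C (b i) : MvPolynomial (Fin N) ℝ).totalDegree +
          ((∑ t, (MvPolynomial.X t - MvPolynomial.C (z i t)) * MvPolynomial.C (a i t)) *
          ∏ j ∈ Finset.univ.erase i,
            ∑ t, (MvPolynomial.X t - MvPolynomial.C (z j t)) *
              (MvPolynomial.X t - MvPolynomial.C (z j t))).totalDegree :=
          MvPolynomial.totalDegree_mul _ _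
      _ ≤ 0 + (1 + ∑ j ∈ Finset.univ.erase i, 2) := by
          rw [MvPolynomial.totalDegree_C]
          refine add_le_add le_rfl ((MvPolynomial.totalDegree_mul _ _).trans
            (add_le_add h1 ((MvPolynomial.totalDegree_finset_prod _ _).trans
              (Finset.sum_le_sum fun j _ => h2 j))))
      _ ≤ 2 * k - 1 := by
          rw [Finset.sum_const, Finset.card_erase_of_mem (Finset.mem_univ i),
            Finset.card_univ, Fintype.card_fin]
          simp only [smul_eq_mul]
          omega
  · -- derivative condition
    intro m v
    rw [heval]
    have hF : HasFDerivAt (fun x => ∑ i, b i * (ℓf i x * B i x))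
        (∑ i, b i • (ℓf i (z m) • DB i (z m) + B i (z m) • A i)) (z m) :=
      HasFDerivAt.fun_sum fun i _ =>
        ((hℓf_deriv i (z m)).mul (hB_deriv i (z m))).const_mul (b i)
    rw [hF.fderiv]
    rw [ContinuousLinearMap.sum_apply]
    rw [Finset.sum_eq_single m]
    · -- the main term
      have hℓf0 : ℓf m (z m) = 0 := by simp [hℓf]
      have hBm : b m * B m (z m) = 1 := by
        rw [hb, hB, ← Finset.prod_mul_distrib]
        refine Finset.prod_eq_one fun j hj => ?_
        exact inv_mul_cancel₀ (ne_of_gt (hcpos m j (Finset.ne_of_mem_erase hj)))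
      simp only [hℓf0, zero_smul, zero_add, ContinuousLinearMap.smul_apply,
        smul_eq_mul]
      rw [hAapp, ← mul_assoc, hBm, one_mul]
      have := DFunLike.congr_fun (hℓ m) v
      simpa using this
    · -- other terms vanish
      intro i _ him
      have hmem : m ∈ Finset.univ.erase i := Finset.mem_erase.mpr ⟨fun h => him h.symm, Finset.mem_univ m⟩
      have hB0 : B i (z m) = 0 :=
        Finset.prod_eq_zero hmem (gfun_self (z m))
      have hDB0 : DB i (z m) = 0 := by
        rw [hDB]
        refine Finset.sum_eq_zero fun j hj => ?_
        rcases eq_or_ne j m with rfl | hjm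
        · rw [Gmap_self]; simp
        · have : m ∈ (Finset.univ.erase i).erase j :=
            Finset.mem_erase.mpr ⟨Ne.symm hjm, hmem⟩
          rw [Finset.prod_eq_zero this (gfun_self (z m))]
          simp
      simp [hB0, hDB0]
    · simp
end

section
/- Let M ⊆ ℝ^N be a compact embedded C¹ submanifold, T : M → M a C¹ diffeomorphism, h : M → ℝ a C¹ function, k ≥ dim M, and x ∈ M a point that is not periodic of any period p ∈ {1,…,k−1}. Let h₁,…,h_m be a basis of the space of N-variate polynomials of degree at most 2k−1, and for α ∈ ℝ^m define φ_α : M → ℝ^k by φ_α(y) = ((h+Σ_j α_j h_j)(y), (h+Σ_j α_j h_j)(Ty), …, (h+Σ_j α_j h_j)(T^{k−1}y)). Then the linear map Ψ : ℝ^m → Lin(T_x M, ℝ^k) given by Ψ(α) = Σ_j α_j D_x φ_{h_j,k} is surjective, where φ_{h_j,k} is the k-delay coordinate map of h_j. -/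
open MvPolynomial Finset

namespace Stmt9Aux


variable {N : ℕ}

/-- Linear polynomial whose evaluation is `φ y - c`. -/
noncomputable def linP (φ : (Fin N → ℝ) →ₗ[ℝ] ℝ) (c : ℝ) : MvPolynomial (Fin N) ℝ :=
  (∑ n : Fin N, C (φ (Pi.single n 1)) * X n) - C c

lemma eval_linP (φ : (Fin N → ℝ) →ₗ[ℝ] ℝ) (c : ℝ) (y : Fin N → ℝ) :
    eval y (linP φ c) = φ y - c := by
  have h1 : eval y (linP φ c) = (∑ n : Fin N, φ (Pi.single n 1) * y n) - c := by
    simp [linP]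
  rw [h1]
  congr 1
  rw [LinearMap.pi_apply_eq_sum_univ φ y]
  refine Finset.sum_congr rfl fun n _ => ?_
  rw [smul_eq_mul, mul_comm]
  congr 2
  funext j
  simp [Pi.single_apply, eq_comm]

lemma totalDegree_linP (φ : (Fin N → ℝ) →ₗ[ℝ] ℝ) (c : ℝ) : (linP φ c).totalDegree ≤ 1 := by
  unfold linP
  rw [sub_eq_add_neg, ← map_neg C]
  refine (totalDegree_add _ _).trans (max_le ?_ ?_)
  · refine (totalDegree_finset_sum _ _).trans (Finset.sup_le fun n _ => ?_)
    refine (totalDegree_mul _ _).trans ?_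
    simp [totalDegree_X]
  · simp

lemma hasFDerivAt_linP (φ : (Fin N → ℝ) →ₗ[ℝ] ℝ) (c : ℝ) (y : Fin N → ℝ) :
    HasFDerivAt (fun w => eval w (linP φ c)) (LinearMap.toContinuousLinearMap φ) y := by
  have h1 : (fun w : Fin N → ℝ => eval w (linP φ c)) = fun w => φ w - c :=
    funext (eval_linP φ c)
  rw [h1]
  exact (LinearMap.toContinuousLinearMap φ).hasFDerivAt.sub_const c

lemma differentiable_eval (p : MvPolynomial (Fin N) ℝ) :
    Differentiable ℝ (fun y : Fin N → ℝ => eval y p) := by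
  induction p using MvPolynomial.induction_on with
  | C a => simpa using differentiable_const a
  | add p q hp hq =>
      have : (fun y : Fin N → ℝ => eval y (p + q)) =
          fun y => eval y p + eval y q := by funext y; simp
      rw [this]; exact hp.add hq
  | mul_X p n hp =>
      have : (fun y : Fin N → ℝ => eval y (p * X n)) =
          fun y => eval y p * y n := by funext y; simp
      rw [this]
      exact hp.mul (ContinuousLinearMap.proj n : ((Fin N → ℝ) →L[ℝ] ℝ)).differentiable

/-- the dot-product functional -/
noncomputable def dotL (w : Fin N → ℝ) : (Fin N → ℝ) →ₗ[ℝ] ℝ :=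
  ∑ n, w n • LinearMap.proj n

lemma dotL_apply (w y : Fin N → ℝ) : dotL w y = ∑ n, w n * y n := by
  simp [dotL]

noncomputable def Lp {k : ℕ} (z : Fin k → (Fin N → ℝ)) (i j : Fin k) :
    MvPolynomial (Fin N) ℝ :=
  C (dotL (z i - z j) (z i - z j))⁻¹ * linP (dotL (z i - z j)) (dotL (z i - z j) (z j))

noncomputable def Pp {k : ℕ} (z : Fin k → (Fin N → ℝ)) (i : Fin k) :
    MvPolynomial (Fin N) ℝ :=
  ∏ j ∈ univ.erase i, (Lp z i j) ^ 2

lemma key {k : ℕ} (hk : 1 ≤ k) (z : Fin k → (Fin N → ℝ)) (hzd : Function.Injective z)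
    (ψ : Fin k → ((Fin N → ℝ) →ₗ[ℝ] ℝ)) :
    ∃ Q : MvPolynomial (Fin N) ℝ, Q.totalDegree ≤ 2 * k - 1 ∧
      ∀ s, fderiv ℝ (fun y => eval y Q) (z s) = LinearMap.toContinuousLinearMap (ψ s) := by
  classical
  have hden : ∀ i j : Fin k, i ≠ j → dotL (z i - z j) (z i - z j) ≠ 0 := by
    intro i j hij
    have hw : z i - z j ≠ 0 := sub_ne_zero.mpr fun e => hij (hzd e)
    obtain ⟨n, hn⟩ := Function.ne_iff.mp hw
    rw [dotL_apply]
    have hpos : 0 < ∑ n, (z i - z j) n * (z i - z j) n := by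
      refine Finset.sum_pos' (fun m _ => mul_self_nonneg _) ⟨n, Finset.mem_univ n, ?_⟩
      exact mul_self_pos.mpr (by simpa using hn)
    exact ne_of_gt hpos
  -- values of Lp
  have hLpval : ∀ i j : Fin k, ∀ y, eval y (Lp z i j) =
      (dotL (z i - z j) (z i - z j))⁻¹ * (dotL (z i - z j) y - dotL (z i - z j) (z j)) := by
    intro i j y
    simp [Lp, eval_linP]
  have hLp_zi : ∀ i j : Fin k, i ≠ j → eval (z i) (Lp z i j) = 1 := by
    intro i j hij
    rw [hLpval]
    rw [show dotL (z i - z j) (z i) - dotL (z i - z j) (z j)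
        = dotL (z i - z j) (z i - z j) by rw [map_sub]]
    exact inv_mul_cancel₀ (hden i j hij)
  have hLp_zj : ∀ i j : Fin k, eval (z j) (Lp z i j) = 0 := by
    intro i j; rw [hLpval]; simp
  set Q : MvPolynomial (Fin N) ℝ :=
    ∑ i, linP (ψ i) (ψ i (z i)) * Pp z i with hQdef
  refine ⟨Q, ?_, ?_⟩
  · refine (totalDegree_finset_sum _ _).trans (Finset.sup_le fun i _ => ?_)
    refine (totalDegree_mul _ _).trans ?_
    have h1 := totalDegree_linP (ψ i) (ψ i (z i))
    have h2 : (Pp z i).totalDegree ≤ 2 * (k - 1) := by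
      refine (totalDegree_finset_prod _ _).trans ?_
      have hb : ∀ j ∈ univ.erase i, ((Lp z i j) ^ 2).totalDegree ≤ 2 := by
        intro j _
        rw [pow_two]
        have hL : (Lp z i j).totalDegree ≤ 1 := by
          refine (totalDegree_mul _ _).trans ?_
          simpa using totalDegree_linP (dotL (z i - z j)) (dotL (z i - z j) (z j))
        exact (totalDegree_mul _ _).trans (by omega)
      calc ∑ j ∈ univ.erase i, ((Lp z i j) ^ 2).totalDegree
          ≤ ∑ _j ∈ univ.erase i, 2 := Finset.sum_le_sum hb
        _ = 2 * (k - 1) := by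
            simp [Finset.card_erase_of_mem, mul_comm]
    omega
  · intro s
    have hfun : (fun y => eval y Q) =
        fun y => ∑ i, eval y (linP (ψ i) (ψ i (z i))) * eval y (Pp z i) := by
      funext y; simp [hQdef]
    rw [hfun]
    have hD : HasFDerivAt
        (fun y => ∑ i, eval y (linP (ψ i) (ψ i (z i))) * eval y (Pp z i))
        (∑ i, if i = s then LinearMap.toContinuousLinearMap (ψ s) else 0) (z s) := by
      refine HasFDerivAt.fun_sum fun i _ => ?_
      by_cases his : i = s
      · subst his
        have hG := hasFDerivAt_linP (ψ i) (ψ i (z i)) (z i)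
        have hPd : DifferentiableAt ℝ (fun y => eval y (Pp z i)) (z i) :=
          (differentiable_eval _) _
        have hP := hPd.hasFDerivAt
        have hGP := hG.fun_mul hP
        have hGval : eval (z i) (linP (ψ i) (ψ i (z i))) = 0 := by
          rw [eval_linP]; ring
        have hPval : eval (z i) (Pp z i) = 1 := by
          rw [Pp]
          rw [show (eval (z i)) (∏ j ∈ univ.erase i, Lp z i j ^ 2)
            = ∏ j ∈ univ.erase i, (eval (z i) (Lp z i j)) ^ 2 by simp]
          refine Finset.prod_eq_one fun j hj => ?_
          rw [hLp_zi i j (Finset.ne_of_mem_erase hj).symm]; norm_num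
        simpa [hGval, hPval] using hGP
      · -- i ≠ s : derivative is 0
        simp only [if_neg his]
        have hsmem : s ∈ univ.erase i := Finset.mem_erase.mpr ⟨Ne.symm his, mem_univ s⟩
        have hsplit : ∀ y, eval y (linP (ψ i) (ψ i (z i))) * eval y (Pp z i)
            = (eval y (Lp z i s) * eval y (Lp z i s)) *
              (eval y (linP (ψ i) (ψ i (z i))) *
                ∏ j ∈ (univ.erase i).erase s, (eval y (Lp z i j)) ^ 2) := by
          intro y
          rw [Pp, ← Finset.mul_prod_erase _ _ hsmem]
          rw [show (eval y) (Lp z i s ^ 2 * ∏ j ∈ (univ.erase i).erase s, Lp z i j ^ 2)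
            = (eval y (Lp z i s)) ^ 2 * ∏ j ∈ (univ.erase i).erase s, (eval y (Lp z i j)) ^ 2
            by simp]
          ring
        have hfun2 : (fun y => eval y (linP (ψ i) (ψ i (z i))) * eval y (Pp z i))
            = fun y => (eval y (Lp z i s) * eval y (Lp z i s)) *
              (eval y (linP (ψ i) (ψ i (z i))) *
                ∏ j ∈ (univ.erase i).erase s, (eval y (Lp z i j)) ^ 2) := funext hsplit
        rw [hfun2]
        have hud : DifferentiableAt ℝ (fun y => eval y (Lp z i s)) (z s) :=
          (differentiable_eval _) _
        have hu := hud.hasFDerivAt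
        have hu0 : eval (z s) (Lp z i s) = 0 := hLp_zj i s
        have huu := hu.fun_mul hu
        have huu0 : HasFDerivAt (fun y => eval y (Lp z i s) * eval y (Lp z i s))
            (0 : (Fin N → ℝ) →L[ℝ] ℝ) (z s) := by simpa [hu0] using huu
        have hRd : DifferentiableAt ℝ (fun y => eval y (linP (ψ i) (ψ i (z i))) *
            ∏ j ∈ (univ.erase i).erase s, (eval y (Lp z i j)) ^ 2) (z s) := by
          refine DifferentiableAt.mul ((differentiable_eval _) _) ?_
          exact (HasFDerivAt.finset_prod (u := (univ.erase i).erase s)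
            (fun j _ => (((differentiable_eval (Lp z i j)) _).pow 2).hasFDerivAt)).differentiableAt
        have hfin := huu0.fun_mul hRd.hasFDerivAt
        simpa [hu0] using hfin
    rw [hD.fderiv]
    simp
  done


end Stmt9Aux

open Stmt9Aux



/-- Surjectivity of the perturbation map `Ψ` for delay-coordinate maps.

Setting: `M ⊆ ℝ^N` is a compact embedded C¹ submanifold, `T : ℝ^N → ℝ^N` restricts to a
C¹ diffeomorphism of `M`, and `x ∈ M` is not periodic of any period `p ∈ {1,…,k−1}`, so the
orbit points `z i = T^[i] x`, `i = 0,…,k−1`, are pairwise distinct. `E0 ⊆ ℝ^N` is the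
tangent space `T_x M`, and `B i : E0 → ℝ^N` is the injective linear map
`D_{T^{i-1}x}T ∘ ⋯ ∘ D_xT : T_x M → T_{T^i x}M ⊆ ℝ^N` (composition of differentials of `T`
along the orbit, `B 0` being the inclusion of `E0`). By the chain rule, the differential at
`x` of the `k`-delay coordinate map `φ_{g,k}` of an observable `g` is
`v ↦ (Dg(z i) (B i v))_{i<k}`. If `h₁,…,h_m` is a basis of the `N`-variate polynomials of
degree at most `2k−1`, then `Ψ : ℝ^m → Lin(T_x M, ℝ^k)`, `Ψ α = Σ_j α_j D_x φ_{h_j,k}`, is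
surjective. -/
theorem stmt9 {N k m : ℕ} (hk : 1 ≤ k)
    (M : Set (Fin N → ℝ)) (hM : IsCompact M)
    (T : (Fin N → ℝ) → (Fin N → ℝ)) (hTmaps : Set.MapsTo T M M) (hTinj : Set.InjOn T M)
    (x : Fin N → ℝ) (hx : x ∈ M)
    (hper : ∀ p : ℕ, 1 ≤ p → p ≤ k - 1 → T^[p] x ≠ x)
    (z : Fin k → (Fin N → ℝ)) (hz : ∀ i : Fin k, z i = T^[(i : ℕ)] x)
    (E0 : Submodule ℝ (Fin N → ℝ))
    (B : Fin k → (E0 →ₗ[ℝ] (Fin N → ℝ)))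
    (hBinj : ∀ i, Function.Injective (B i))
    (hB0 : B ⟨0, hk⟩ = E0.subtype)
    (h : Module.Basis (Fin m) ℝ (MvPolynomial.restrictTotalDegree (Fin N) ℝ (2 * k - 1))) :
    Function.Surjective (fun α : Fin m → ℝ =>
      ∑ j : Fin m, α j •
        (LinearMap.pi fun i : Fin k =>
          (fderiv ℝ (fun y : Fin N → ℝ =>
              MvPolynomial.eval y ((h j : MvPolynomial (Fin N) ℝ))) (z i)).toLinearMap ∘ₗ
            B i : E0 →ₗ[ℝ] (Fin k → ℝ))) := by
  classical
  intro L
  -- the orbit points are pairwise distinct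
  have hMT : ∀ n : ℕ, Set.MapsTo (T^[n]) M M := fun n => hTmaps.iterate n
  have hIT : ∀ n : ℕ, Set.InjOn (T^[n]) M := by
    intro n
    induction n with
    | zero => simpa using Set.injOn_id M
    | succ n ih =>
        rw [Function.iterate_succ']
        exact hTinj.comp ih (hMT n)
  have key2 : ∀ i j : Fin k, (i : ℕ) < (j : ℕ) → z i ≠ z j := by
    intro i j hlt he
    rw [hz, hz] at he
    have hx2 : T^[(j : ℕ) - (i : ℕ)] x ∈ M := hMT _ hx
    have heq : T^[(i : ℕ)] (T^[(j : ℕ) - (i : ℕ)] x) = T^[(i : ℕ)] x := by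
      rw [← Function.iterate_add_apply,
        show (i : ℕ) + ((j : ℕ) - (i : ℕ)) = (j : ℕ) by omega]
      exact he.symm
    have hper' : T^[(j : ℕ) - (i : ℕ)] x = x := hIT (i : ℕ) hx2 hx heq
    have hjk := j.isLt
    exact hper ((j : ℕ) - (i : ℕ)) (by omega) (by omega) hper'
  have hzd : Function.Injective z := by
    intro i j he
    by_contra hne
    have hne' : (i : ℕ) ≠ (j : ℕ) := fun hc => hne (Fin.ext hc)
    rcases lt_or_gt_of_ne hne' with hlt | hgt
    · exact key2 i j hlt he
    · exact key2 j i hgt he.symm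
  -- left inverses of B i
  have hleft : ∀ i, ∃ g : (Fin N → ℝ) →ₗ[ℝ] E0, g ∘ₗ B i = LinearMap.id := fun i =>
    (B i).exists_leftInverse_of_injective (LinearMap.ker_eq_bot.mpr (hBinj i))
  choose g hg using hleft
  set ψ : Fin k → ((Fin N → ℝ) →ₗ[ℝ] ℝ) :=
    fun i => (LinearMap.proj i ∘ₗ L) ∘ₗ g i with hψdef
  obtain ⟨Q, hQdeg, hQd⟩ := key hk z hzd ψ
  have hQmem : Q ∈ restrictTotalDegree (Fin N) ℝ (2 * k - 1) :=
    (mem_restrictTotalDegree (σ := Fin N) (R := ℝ) (m := 2 * k - 1) Q).mpr hQdeg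
  set c : Fin m → ℝ := fun j => h.repr ⟨Q, hQmem⟩ j with hcdef
  refine ⟨c, ?_⟩
  have hQsum : Q = ∑ j : Fin m, c j • ((h j : MvPolynomial (Fin N) ℝ)) := by
    have := h.sum_repr ⟨Q, hQmem⟩
    have h2 := congrArg (Subtype.val) this
    rw [Submodule.coe_sum] at h2
    simp only [Submodule.coe_smul] at h2
    exact h2.symm
  have hfd : ∀ i : Fin k,
      fderiv ℝ (fun y : Fin N → ℝ => eval y Q) (z i)
        = ∑ j : Fin m, c j • fderiv ℝ
            (fun y : Fin N → ℝ => eval y ((h j : MvPolynomial (Fin N) ℝ))) (z i) := by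
    intro i
    have hfun : (fun y : Fin N → ℝ => eval y Q)
        = fun y => ∑ j : Fin m, c j •
            eval y ((h j : MvPolynomial (Fin N) ℝ)) := by
      funext y
      rw [hQsum]
      simp [smul_eq_C_mul]
    rw [hfun, fderiv_fun_sum]
    · refine Finset.sum_congr rfl fun j _ => ?_
      exact fderiv_const_smul ((differentiable_eval _) _) (c j)
    · intro j _
      exact ((differentiable_eval _) _).const_smul (c j)
  -- now prove equality of linear maps
  refine LinearMap.ext fun v => ?_
  funext i
  have e1 : (∑ j : Fin m, c j •
      (LinearMap.pi fun i : Fin k =>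
        (fderiv ℝ (fun y : Fin N → ℝ =>
            eval y ((h j : MvPolynomial (Fin N) ℝ))) (z i)).toLinearMap ∘ₗ
          B i : E0 →ₗ[ℝ] (Fin k → ℝ))) v i
      = ∑ j : Fin m, c j • (fderiv ℝ (fun y : Fin N → ℝ =>
          eval y ((h j : MvPolynomial (Fin N) ℝ))) (z i)) (B i v) := by
    simp
  rw [e1]
  have e2 : ∑ j : Fin m, c j • (fderiv ℝ (fun y : Fin N → ℝ =>
        eval y ((h j : MvPolynomial (Fin N) ℝ))) (z i)) (B i v)
      = (fderiv ℝ (fun y : Fin N → ℝ => eval y Q) (z i)) (B i v) := by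
    rw [hfd i]
    simp
  rw [e2, hQd i]
  have e3 : LinearMap.toContinuousLinearMap (ψ i) (B i v) = ψ i (B i v) := rfl
  rw [e3, hψdef]
  have e4 : g i (B i v) = v := by
    have := congrArg (fun f => f v) (hg i)
    simpa using this
  simp [e4]
end

section
/- Let M ⊆ ℝ^N be a compact set, T : M → M an injective map, k ∈ ℕ, and h₁, …, h_m a basis of the N-variate polynomials of degree at most 2k−1. For x, y ∈ M let D_{x,y} be the k×m matrix with entries h_j(T^{i-1}x) − h_j(T^{i-1}y). If x is not a periodic point of T of period p for any p ∈ {1, …, k−1}, and x does not lie in the full orbit of y (i.e., x ≠ Tⁿy and y ≠ Tⁿx for all n ≥ 0), then rank(D_{x,y}) = k. -/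
open MvPolynomial

/-- Interpolation: a polynomial of degree ≤ |S| that is 1 at `p` and 0 on `S`. -/
lemma interp_aux {N : ℕ} (p : Fin N → ℝ) (S : Finset (Fin N → ℝ)) (hp : p ∉ S) :
    ∃ P : MvPolynomial (Fin N) ℝ, P.totalDegree ≤ S.card ∧
      MvPolynomial.eval p P = 1 ∧ ∀ q ∈ S, MvPolynomial.eval q P = 0 := by
  classical
  set f : (Fin N → ℝ) → MvPolynomial (Fin N) ℝ := fun q =>
    if h : ∃ i, p i ≠ q i then
      MvPolynomial.C (p h.choose - q h.choose)⁻¹ * (MvPolynomial.X h.choose -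
        MvPolynomial.C (q h.choose)) else 1 with hf
  have hex : ∀ q ∈ S, ∃ i, p i ≠ q i := by
    intro q hq
    by_contra hc
    push_neg at hc
    exact hp (by rwa [funext hc])
  have hdegf : ∀ q, (f q).totalDegree ≤ 1 := by
    intro q
    by_cases h : ∃ i, p i ≠ q i
    · simp only [hf, dif_pos h]
      refine le_trans (totalDegree_mul _ _) ?_
      rw [totalDegree_C]
      simpa using le_trans (totalDegree_sub _ _) (by simp [totalDegree_X, totalDegree_C])
    · simp [hf, dif_neg h]
  have hevalp : ∀ q ∈ S, MvPolynomial.eval p (f q) = 1 := by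
    intro q hq
    have h := hex q hq
    have hne : p h.choose - q h.choose ≠ 0 := sub_ne_zero_of_ne h.choose_spec
    simp only [hf, dif_pos h]
    simp [inv_mul_cancel₀ hne]
  have hevalq : ∀ q ∈ S, MvPolynomial.eval q (f q) = 0 := by
    intro q hq
    have h := hex q hq
    simp only [hf, dif_pos h]
    simp
  refine ⟨∏ q ∈ S, f q, ?_, ?_, ?_⟩
  · refine le_trans (totalDegree_finset_prod _ _) ?_
    calc ∑ q ∈ S, (f q).totalDegree ≤ ∑ q ∈ S, 1 := Finset.sum_le_sum (fun q _ => hdegf q)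
    _ = S.card := by simp
  · rw [map_prod]
    exact Finset.prod_eq_one (fun q hq => hevalp q hq)
  · intro q hq
    rw [map_prod]
    exact Finset.prod_eq_zero hq (hevalq q hq)

/-- Let `M ⊆ ℝ^N` be compact, `T : M → M` injective, and `h₁,…,h_m` a basis of the
`N`-variate polynomials of total degree at most `2k−1`. If `x ∈ M` is not periodic of any
period `p ∈ {1,…,k−1}` and `x` is not in the full orbit of `y ∈ M` (i.e. `x ≠ Tⁿy` and
`y ≠ Tⁿx` for all `n ≥ 0`), then the `k × m` matrix `D_{x,y}` with entries
`h_j(T^{i-1}x) − h_j(T^{i-1}y)` has rank `k`. -/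
theorem stmt19 {N k m : ℕ} (hk : 1 ≤ k) (M : Set (Fin N → ℝ)) (hM : IsCompact M)
    (T : (Fin N → ℝ) → (Fin N → ℝ)) (hTmaps : Set.MapsTo T M M)
    (hTinj : Set.InjOn T M)
    (h : Module.Basis (Fin m) ℝ (MvPolynomial.restrictTotalDegree (Fin N) ℝ (2 * k - 1)))
    (x y : Fin N → ℝ) (hx : x ∈ M) (hy : y ∈ M)
    (hper : ∀ p : ℕ, 1 ≤ p → p ≤ k - 1 → T^[p] x ≠ x)
    (horb : ∀ n : ℕ, T^[n] y ≠ x ∧ T^[n] x ≠ y)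
    (D : Matrix (Fin k) (Fin m) ℝ)
    (hD : ∀ (i : Fin k) (j : Fin m),
      D i j = MvPolynomial.eval (T^[(i : ℕ)] x) ((h j : MvPolynomial (Fin N) ℝ))
            - MvPolynomial.eval (T^[(i : ℕ)] y) ((h j : MvPolynomial (Fin N) ℝ))) :
    D.rank = k := by
  classical
  have hMapsN : ∀ n, Set.MapsTo T^[n] M M := hTmaps.iterate
  have hInjN : ∀ n, Set.InjOn T^[n] M := hTinj.iterate hTmaps
  -- points on the x-orbit never meet the y-orbit
  have fact1 : ∀ i j : ℕ, T^[i] x ≠ T^[j] y := by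
    intro i j hEq
    rcases le_total i j with hij | hij
    · have h1 : T^[i] x = T^[i] (T^[j - i] y) := by
        rw [← Function.iterate_add_apply, Nat.add_sub_cancel' hij, hEq]
      exact (horb (j - i)).1 ((hInjN i hx (hMapsN _ hy) h1).symm)
    · have h1 : T^[j] (T^[i - j] x) = T^[j] y := by
        rw [← Function.iterate_add_apply, Nat.add_sub_cancel' hij, hEq]
      exact (horb (i - j)).2 (hInjN j (hMapsN _ hx) hy h1)
  -- the first k points of the x-orbit are pairwise distinct
  have fact2 : ∀ i j : Fin k, i ≠ j → T^[(i : ℕ)] x ≠ T^[(j : ℕ)] x := by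
    have key : ∀ i j : Fin k, (i : ℕ) < (j : ℕ) → T^[(i : ℕ)] x ≠ T^[(j : ℕ)] x := by
      intro i j hij hEq
      have h1 : T^[(i : ℕ)] x = T^[(i : ℕ)] (T^[(j : ℕ) - (i : ℕ)] x) := by
        rw [← Function.iterate_add_apply, Nat.add_sub_cancel' hij.le, hEq]
      have h2 : x = T^[(j : ℕ) - (i : ℕ)] x := hInjN _ hx (hMapsN _ hx) h1
      have hj : (j : ℕ) ≤ k - 1 := by omega
      exact hper ((j : ℕ) - (i : ℕ)) (by omega) (by omega) h2.symm
    intro i j hij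
    rcases lt_or_gt_of_ne (fun hc : (i : ℕ) = (j : ℕ) => hij (Fin.ext hc)) with hlt | hgt
    · exact key i j hlt
    · exact (key j i hgt).symm
  -- rows of D are linearly independent
  have hLI : LinearIndependent ℝ D := by
    refine Fintype.linearIndependent_iff.mpr ?_
    intro g hg i0
    have hgj : ∀ j : Fin m, ∑ i : Fin k, g i * D i j = 0 := by
      intro j
      have := congrFun hg j
      simpa [Finset.sum_apply] using this
    -- the linear functional
    set L : MvPolynomial (Fin N) ℝ →ₗ[ℝ] ℝ :=
      ∑ i : Fin k, g i • ((MvPolynomial.aeval (T^[(i : ℕ)] x)).toLinearMap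
        - (MvPolynomial.aeval (T^[(i : ℕ)] y)).toLinearMap) with hLdef
    have hLapply : ∀ P : MvPolynomial (Fin N) ℝ,
        L P = ∑ i : Fin k, g i * (MvPolynomial.eval (T^[(i : ℕ)] x) P
          - MvPolynomial.eval (T^[(i : ℕ)] y) P) := by
      intro P
      have haev : ∀ (pt : Fin N → ℝ) (Q : MvPolynomial (Fin N) ℝ),
          MvPolynomial.aeval pt Q = MvPolynomial.eval pt Q := fun pt Q => by
        rw [← MvPolynomial.coe_aeval_eq_eval]; rfl
      rw [hLdef]
      simp [LinearMap.sum_apply, LinearMap.smul_apply, LinearMap.sub_apply,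
        AlgHom.toLinearMap_apply, haev, smul_eq_mul]
    have hL0 : ∀ P ∈ MvPolynomial.restrictTotalDegree (Fin N) ℝ (2 * k - 1), L P = 0 := by
      intro P hP
      have hcomp : L.comp (MvPolynomial.restrictTotalDegree (Fin N) ℝ (2 * k - 1)).subtype
          = 0 := by
        apply h.ext
        intro j
        simp only [LinearMap.comp_apply, Submodule.subtype_apply, LinearMap.zero_apply]
        rw [hLapply]
        have := hgj j
        simp only [hD] at this
        exact this
      have := congrFun (congrArg DFunLike.coe hcomp) ⟨P, hP⟩
      simpa using this
    -- the interpolation polynomial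
    set S : Finset (Fin N → ℝ) :=
      (Finset.univ.erase i0).image (fun i : Fin k => T^[(i : ℕ)] x) ∪
        Finset.univ.image (fun i : Fin k => T^[(i : ℕ)] y) with hS
    have hpS : T^[(i0 : ℕ)] x ∉ S := by
      rw [hS]
      simp only [Finset.mem_union, Finset.mem_image, Finset.mem_erase, Finset.mem_univ,
        and_true, not_or, not_exists]
      constructor
      · rintro i ⟨hi, hEq⟩
        exact fact2 i i0 hi hEq
      · rintro i ⟨-, hEq⟩
        exact fact1 (i0 : ℕ) (i : ℕ) hEq.symm
    have hScard : S.card ≤ 2 * k - 1 := by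
      calc S.card ≤ ((Finset.univ.erase i0).image (fun i : Fin k => T^[(i : ℕ)] x)).card
          + (Finset.univ.image (fun i : Fin k => T^[(i : ℕ)] y)).card := Finset.card_union_le _ _
      _ ≤ (Finset.univ.erase i0).card + (Finset.univ : Finset (Fin k)).card :=
          add_le_add (Finset.card_image_le) (Finset.card_image_le)
      _ = (k - 1) + k := by
          rw [Finset.card_erase_of_mem (Finset.mem_univ _)]; simp
      _ ≤ 2 * k - 1 := by omega
    obtain ⟨P, hdeg, hp1, hq0⟩ := interp_aux (T^[(i0 : ℕ)] x) S hpS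
    have hPmem : P ∈ MvPolynomial.restrictTotalDegree (Fin N) ℝ (2 * k - 1) := by
      rw [MvPolynomial.mem_restrictTotalDegree]
      exact hdeg.trans hScard
    have hLP := hL0 P hPmem
    rw [hLapply] at hLP
    have hterms : ∀ i : Fin k, g i * (MvPolynomial.eval (T^[(i : ℕ)] x) P
        - MvPolynomial.eval (T^[(i : ℕ)] y) P) = if i = i0 then g i0 else 0 := by
      intro i
      have hy0 : MvPolynomial.eval (T^[(i : ℕ)] y) P = 0 := by
        apply hq0
        rw [hS]
        exact Finset.mem_union_right _ (Finset.mem_image_of_mem _ (Finset.mem_univ i))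
      by_cases hi : i = i0
      · subst hi
        simp [hp1, hy0]
      · have hx0 : MvPolynomial.eval (T^[(i : ℕ)] x) P = 0 := by
          apply hq0
          rw [hS]
          exact Finset.mem_union_left _
            (Finset.mem_image_of_mem _ (Finset.mem_erase.mpr ⟨hi, Finset.mem_univ i⟩))
        simp [hx0, hy0, hi]
    rw [Finset.sum_congr rfl (fun i _ => hterms i)] at hLP
    simp only [Finset.sum_ite_eq', Finset.mem_univ, if_true] at hLP
    exact hLP
  rw [hLI.rank_matrix, Fintype.card_fin]
end
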